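/- If ‖x‖₂ = ‖x'‖₂ = 1, then the variance of the hashed inner product is at most 2/m, i.e., Var(⟨x,x'⟩_φ) ≤ 2/m. -/

import Mathlib

open Finset

/-- Sign associated to a boolean. -/
noncomputable def sgn (b : Bool) : ℝ := if b then 1 else -1


lemma sgn_sq (b : Bool) : sgn b * sgn b = 1 := by cases b <;> simp [sgn]
lemma sgn_not (b : Bool) : sgn (!b) = - sgn b := by cases b <;> simp [sgn]

lemma flip_invol {d : ℕ} (i : Fin d) (ξ : Fin d → Bool) :
    Function.update (Function.update ξ i (!ξ i)) i (!(Function.update ξ i (!ξ i)) i) = ξ := by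
  funext t
  by_cases ht : t = i
  · subst ht; simp
  · simp [Function.update_of_ne ht]

lemma sum_flip_zero {d : ℕ} (i : Fin d) (F : (Fin d → Bool) → ℝ)
    (hF : ∀ ξ, F (Function.update ξ i (!ξ i)) = - F ξ) :
    ∑ ξ : Fin d → Bool, F ξ = 0 := by
  let e : (Fin d → Bool) ≃ (Fin d → Bool) :=
    ⟨fun ξ => Function.update ξ i (!ξ i), fun ξ => Function.update ξ i (!ξ i),
      fun ξ => flip_invol i ξ, fun ξ => flip_invol i ξ⟩
  have h1 : ∑ ξ : Fin d → Bool, F (e ξ) = ∑ ξ : Fin d → Bool, F ξ := Equiv.sum_comp e F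
  have h2 : ∀ ξ : Fin d → Bool, F (e ξ) = - F ξ := fun ξ => hF ξ
  simp only [h2, Finset.sum_neg_distrib] at h1
  linarith

lemma card_fun_bool (d : ℕ) : ((Finset.univ : Finset (Fin d → Bool)).card : ℝ) = 2 ^ d := by
  simp [Finset.card_univ]

lemma sum_sgn_two {d : ℕ} {i j : Fin d} (hij : i ≠ j) :
    ∑ ξ : Fin d → Bool, sgn (ξ i) * sgn (ξ j) = 0 := by
  refine sum_flip_zero i _ (fun ξ => ?_)
  rw [Function.update_self, Function.update_of_ne (Ne.symm hij), sgn_not]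
  ring

/-- flip at `i` when `i` is distinct from `j, k, l`. -/
lemma sum_sgn_four_flip {d : ℕ} {i j k l : Fin d} (h1 : i ≠ j) (h2 : i ≠ k) (h3 : i ≠ l) :
    ∑ ξ : Fin d → Bool, (sgn (ξ i) * sgn (ξ j)) * (sgn (ξ k) * sgn (ξ l)) = 0 := by
  refine sum_flip_zero i _ (fun ξ => ?_)
  rw [Function.update_self, Function.update_of_ne (Ne.symm h1),
    Function.update_of_ne (Ne.symm h2), Function.update_of_ne (Ne.symm h3), sgn_not]
  ring

lemma sum_hash_pair {d m : ℕ} (hm : 0 < m) {i j : Fin d} (hij : i ≠ j) :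
    ∑ h : Fin d → Fin m, (if h i = h j then (1:ℝ) else 0) = (m:ℝ) ^ d / m := by
  classical
  let e := Equiv.funSplitAt i (Fin m)
  have h1 : ∑ h : Fin d → Fin m, (if h i = h j then (1:ℝ) else 0)
      = ∑ p : Fin m × ({ t : Fin d // t ≠ i } → Fin m),
          (if (e.symm p) i = (e.symm p) j then (1:ℝ) else 0) :=
    (Equiv.sum_comp e.symm _).symm
  have hii : ∀ p : Fin m × ({ t : Fin d // t ≠ i } → Fin m), (e.symm p) i = p.1 := by
    intro p; simp [e, Equiv.funSplitAt, Equiv.piSplitAt]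
  have hjj : ∀ p : Fin m × ({ t : Fin d // t ≠ i } → Fin m),
      (e.symm p) j = p.2 ⟨j, hij.symm⟩ := by
    intro p; simp [e, Equiv.funSplitAt, Equiv.piSplitAt, hij.symm]
  rw [h1]
  rw [Fintype.sum_prod_type_right]
  have h2 : ∀ g : { t : Fin d // t ≠ i } → Fin m,
      (∑ v : Fin m, if (e.symm (v, g)) i = (e.symm (v, g)) j then (1:ℝ) else 0) = 1 := by
    intro g
    simp only [hii, hjj]
    simp
  rw [Finset.sum_congr rfl (fun g _ => h2 g)]
  have hd : 0 < d := i.pos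
  have hcard : Fintype.card { t : Fin d // t ≠ i } = d - 1 := by
    simp [Fintype.card_subtype_compl]
  simp only [Finset.sum_const, Finset.card_univ, Fintype.card_fun, hcard, nsmul_eq_mul,
    mul_one, Fintype.card_fin]
  have : (m:ℝ) ^ d = (m:ℝ) ^ (d - 1) * m := by
    rw [← pow_succ]; congr 1; omega
  rw [this]
  field_simp
  norm_cast

lemma key1 {d m : ℕ} (hm : 0 < m) (i j : Fin d) :
    (∑ h : Fin d → Fin m, (if h i = h j then (1:ℝ) else 0)) *
      (∑ ξ : Fin d → Bool, sgn (ξ i) * sgn (ξ j))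
    = (m:ℝ) ^ d * 2 ^ d * (if i = j then 1 else 0) := by
  rcases eq_or_ne i j with rfl | hij
  · simp [sgn_sq, Finset.card_univ]
  · rw [sum_sgn_two hij]
    simp [hij]

lemma ite_and3 (P Q R : Prop) [Decidable P] [Decidable Q] [Decidable R] :
    (if P ∧ Q ∧ R then (1:ℝ) else 0)
      = (if P then 1 else 0) * (if Q then 1 else 0) * (if R then 1 else 0) := by
  by_cases hP : P <;> by_cases hQ : Q <;> by_cases hR : R <;> simp [hP, hQ, hR]

lemma key4 {d m : ℕ} (hm : 0 < m) (i j k l : Fin d) :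
    (∑ h : Fin d → Fin m, (if h i = h j then (1:ℝ) else 0) * (if h k = h l then 1 else 0)) *
      (∑ ξ : Fin d → Bool, (sgn (ξ i) * sgn (ξ j)) * (sgn (ξ k) * sgn (ξ l)))
    = (m:ℝ) ^ d * 2 ^ d *
      ((if i = j then (1:ℝ) else 0) * (if k = l then 1 else 0)
        + (1 / m) * ((if i = k then 1 else 0) * (if j = l then 1 else 0))
        + (1 / m) * ((if i = l then 1 else 0) * (if j = k then 1 else 0))
        - (2 / m) * (if i = j ∧ i = k ∧ i = l then 1 else 0)) := by
  have hm' : (m:ℝ) ≠ 0 := Nat.cast_ne_zero.mpr hm.ne'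
  rcases eq_or_ne i j with rfl | hij
  · rcases eq_or_ne k l with rfl | hkl
    · -- i = j, k = l
      have hS : ∑ ξ : Fin d → Bool, (sgn (ξ i) * sgn (ξ i)) * (sgn (ξ k) * sgn (ξ k))
          = 2 ^ d := by simp [sgn_sq, Finset.card_univ]
      have hH : ∑ h : Fin d → Fin m,
          (if h i = h i then (1:ℝ) else 0) * (if h k = h k then 1 else 0) = (m:ℝ) ^ d := by
        simp [Finset.card_univ]
      rw [hS, hH]
      rcases eq_or_ne i k with rfl | hik
      · simp; field_simp; ring
      · simp [hik]
    · -- i = j, k ≠ l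
      have hS : ∑ ξ : Fin d → Bool, (sgn (ξ i) * sgn (ξ i)) * (sgn (ξ k) * sgn (ξ l))
          = 0 := by
        simp only [sgn_sq, one_mul]
        exact sum_sgn_two hkl
      rw [hS, mul_zero]
      symm
      rw [mul_eq_zero]; right
      simp only [ite_and3]
      split_ifs <;> first | ring1 | (exfalso; clear hS; subst_vars; simp_all)
  · rcases eq_or_ne k l with rfl | hkl
    · -- i ≠ j, k = l
      have hS : ∑ ξ : Fin d → Bool, (sgn (ξ i) * sgn (ξ j)) * (sgn (ξ k) * sgn (ξ k))
          = 0 := by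
        simp only [sgn_sq, mul_one]
        exact sum_sgn_two hij
      rw [hS, mul_zero]
      symm
      rw [mul_eq_zero]; right
      simp only [ite_and3]
      split_ifs <;> first | ring1 | (exfalso; clear hS; subst_vars; simp_all)
    · -- i ≠ j, k ≠ l
      rcases eq_or_ne i k with rfl | hik
      · rcases eq_or_ne j l with rfl | hjl
        · -- i = k, j = l (i ≠ j)
          have hS : ∑ ξ : Fin d → Bool, (sgn (ξ i) * sgn (ξ j)) * (sgn (ξ i) * sgn (ξ j))
              = 2 ^ d := by
            have : ∀ ξ : Fin d → Bool,
                (sgn (ξ i) * sgn (ξ j)) * (sgn (ξ i) * sgn (ξ j))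
                = (sgn (ξ i) * sgn (ξ i)) * (sgn (ξ j) * sgn (ξ j)) := fun ξ => by ring
            simp only [this, sgn_sq, one_mul]
            simp [Finset.card_univ]
          have hH : ∑ h : Fin d → Fin m,
              (if h i = h j then (1:ℝ) else 0) * (if h i = h j then 1 else 0)
              = (m:ℝ) ^ d / m := by
            have : ∀ h : Fin d → Fin m,
                (if h i = h j then (1:ℝ) else 0) * (if h i = h j then 1 else 0)
                = (if h i = h j then 1 else 0) := fun h => by split_ifs <;> ring
            simp only [this]
            exact sum_hash_pair hm hij
          rw [hS, hH,
            if_neg (show ¬(i = j ∧ i = i ∧ i = j) from fun hh => hij hh.1)]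
          simp only [if_neg hij, if_neg (Ne.symm hij), if_pos (rfl : i = i),
            if_pos (rfl : j = j)]
          all_goals field_simp
          all_goals (try simp) <;> ring
        · -- i = k, j ≠ l : j appears once
          have hji : j ≠ i := Ne.symm hij
          have hS : ∑ ξ : Fin d → Bool, (sgn (ξ i) * sgn (ξ j)) * (sgn (ξ i) * sgn (ξ l))
              = 0 := by
            have : ∀ ξ : Fin d → Bool,
                (sgn (ξ i) * sgn (ξ j)) * (sgn (ξ i) * sgn (ξ l))
                = (sgn (ξ j) * sgn (ξ i)) * (sgn (ξ i) * sgn (ξ l)) := fun ξ => by ring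
            simp only [this]
            exact sum_sgn_four_flip hji hji hjl
          rw [hS, mul_zero]
          symm
          rw [mul_eq_zero]; right
          simp only [ite_and3]
          split_ifs <;> first | ring1 | (exfalso; clear hS; subst_vars; simp_all)
      · rcases eq_or_ne i l with rfl | hil
        · rcases eq_or_ne j k with rfl | hjk
          · -- i = l, j = k (i ≠ j)
            have hS : ∑ ξ : Fin d → Bool, (sgn (ξ i) * sgn (ξ j)) * (sgn (ξ j) * sgn (ξ i))
                = 2 ^ d := by
              have : ∀ ξ : Fin d → Bool,
                  (sgn (ξ i) * sgn (ξ j)) * (sgn (ξ j) * sgn (ξ i))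
                  = (sgn (ξ i) * sgn (ξ i)) * (sgn (ξ j) * sgn (ξ j)) := fun ξ => by ring
              simp only [this, sgn_sq, one_mul]
              simp [Finset.card_univ]
            have hH : ∑ h : Fin d → Fin m,
                (if h i = h j then (1:ℝ) else 0) * (if h j = h i then 1 else 0)
                = (m:ℝ) ^ d / m := by
              have : ∀ h : Fin d → Fin m,
                  (if h i = h j then (1:ℝ) else 0) * (if h j = h i then 1 else 0)
                  = (if h i = h j then 1 else 0) := fun h => by
                by_cases hh : h i = h j
                · rw [if_pos hh, if_pos hh.symm]; norm_num
                · rw [if_neg hh, zero_mul]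
              simp only [this]
              exact sum_hash_pair hm hij
            rw [hS, hH,
              if_neg (show ¬(i = j ∧ i = j ∧ i = i) from fun hh => hij hh.1)]
            simp only [if_neg hij, if_neg hkl, if_pos (rfl : i = i),
              if_pos (rfl : j = j)]
            all_goals field_simp
            all_goals (try simp) <;> ring
          · -- i = l, j ≠ k : flip at j
            have hji : j ≠ i := Ne.symm hij
            have hS : ∑ ξ : Fin d → Bool, (sgn (ξ i) * sgn (ξ j)) * (sgn (ξ k) * sgn (ξ i))
                = 0 := by
              have : ∀ ξ : Fin d → Bool,
                  (sgn (ξ i) * sgn (ξ j)) * (sgn (ξ k) * sgn (ξ i))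
                  = (sgn (ξ j) * sgn (ξ i)) * (sgn (ξ k) * sgn (ξ i)) := fun ξ => by ring
              simp only [this]
              exact sum_sgn_four_flip hji hjk hji
            rw [hS, mul_zero]
            symm
            rw [mul_eq_zero]; right
            simp only [ite_and3]
            split_ifs <;> first | ring1 | (exfalso; clear hS; subst_vars; simp_all)
        · -- i distinct from j, k, l
          have hS : ∑ ξ : Fin d → Bool, (sgn (ξ i) * sgn (ξ j)) * (sgn (ξ k) * sgn (ξ l))
              = 0 := sum_sgn_four_flip hij hik hil
          rw [hS, mul_zero]
          symm
          rw [mul_eq_zero]; right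
          simp only [ite_and3]
          split_ifs <;> first | ring1 | (exfalso; clear hS; subst_vars; simp_all)

/-- Hashed inner product for fixed hash `h` and sign `ξ`. -/
noncomputable def hip {d m : ℕ} (h : Fin d → Fin m) (ξ : Fin d → Bool)
    (x x' : Fin d → ℝ) : ℝ :=
  ∑ k : Fin m,
    (∑ j ∈ Finset.univ.filter (fun j => h j = k), sgn (ξ j) * x j) *
    (∑ j ∈ Finset.univ.filter (fun j => h j = k), sgn (ξ j) * x' j)

lemma sum_ite_pair {m : ℕ} (a b : Fin m) (A B : ℝ) :
    ∑ k : Fin m, (if a = k then A else 0) * (if b = k then B else 0)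
      = (if a = b then (1:ℝ) else 0) * (A * B) := by
  rcases eq_or_ne a b with rfl | hab
  · rw [if_pos rfl, one_mul, Finset.sum_eq_single a
      (fun k _ hk => by rw [if_neg (fun hh => hk hh.symm), zero_mul])
      (fun ha => absurd (Finset.mem_univ a) ha)]
    rw [if_pos rfl, if_pos rfl]
  · rw [if_neg hab, zero_mul]
    refine Finset.sum_eq_zero fun k _ => ?_
    rcases eq_or_ne a k with rfl | hak
    · rw [if_neg (Ne.symm hab), mul_zero]
    · rw [if_neg hak, zero_mul]

lemma hip_eq {d m : ℕ} (h : Fin d → Fin m) (ξ : Fin d → Bool) (x x' : Fin d → ℝ) :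
    hip h ξ x x' = ∑ p : Fin d × Fin d,
      (if h p.1 = h p.2 then (1:ℝ) else 0) *
        ((sgn (ξ p.1) * sgn (ξ p.2)) * (x p.1 * x' p.2)) := by
  rw [Fintype.sum_prod_type]
  unfold hip
  have step1 : ∀ k : Fin m,
      (∑ j ∈ Finset.univ.filter (fun j => h j = k), sgn (ξ j) * x j) *
        (∑ j ∈ Finset.univ.filter (fun j => h j = k), sgn (ξ j) * x' j)
      = ∑ i : Fin d, ∑ j : Fin d,
          (if h i = k then sgn (ξ i) * x i else 0) *
            (if h j = k then sgn (ξ j) * x' j else 0) := by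
    intro k
    rw [Finset.sum_filter, Finset.sum_filter, Finset.sum_mul_sum]
  rw [Finset.sum_congr rfl fun k _ => step1 k]
  rw [Finset.sum_comm]
  refine Finset.sum_congr rfl fun i _ => ?_
  rw [Finset.sum_comm]
  refine Finset.sum_congr rfl fun j _ => ?_
  rw [sum_ite_pair (h i) (h j)]
  ring

lemma exp_hip {d m : ℕ} (hm : 0 < m) (x x' : Fin d → ℝ) :
    ∑ h : Fin d → Fin m, ∑ ξ : Fin d → Bool, hip h ξ x x'
      = (m:ℝ) ^ d * 2 ^ d * ∑ i : Fin d, x i * x' i := by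
  have e1 : ∀ h : Fin d → Fin m, ∑ ξ : Fin d → Bool, hip h ξ x x'
      = ∑ p : Fin d × Fin d, (if h p.1 = h p.2 then (1:ℝ) else 0) *
          ((∑ ξ : Fin d → Bool, sgn (ξ p.1) * sgn (ξ p.2)) * (x p.1 * x' p.2)) := by
    intro h
    rw [Finset.sum_congr rfl fun ξ _ => hip_eq h ξ x x', Finset.sum_comm]
    refine Finset.sum_congr rfl fun p _ => ?_
    rw [← Finset.mul_sum]
    congr 1
    rw [← Finset.sum_mul]
  rw [Finset.sum_congr rfl fun h _ => e1 h, Finset.sum_comm]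
  have e2 : ∀ p : Fin d × Fin d,
      (∑ h : Fin d → Fin m, (if h p.1 = h p.2 then (1:ℝ) else 0) *
          ((∑ ξ : Fin d → Bool, sgn (ξ p.1) * sgn (ξ p.2)) * (x p.1 * x' p.2)))
      = ((m:ℝ) ^ d * 2 ^ d * (if p.1 = p.2 then 1 else 0)) * (x p.1 * x' p.2) := by
    intro p
    rw [← Finset.sum_mul, ← mul_assoc, key1 hm p.1 p.2]
  rw [Finset.sum_congr rfl fun p _ => e2 p]
  rw [Fintype.sum_prod_type]
  simp only [mul_ite, mul_one, mul_zero, ite_mul, zero_mul, Finset.sum_ite_eq,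
    Finset.mem_univ, if_true, Finset.mul_sum]

lemma boole_pair_eq {d : ℕ} (a b : Fin d × Fin d) :
    (if a.1 = b.1 then (1:ℝ) else 0) * (if a.2 = b.2 then 1 else 0)
      = if a = b then 1 else 0 := by
  by_cases h1 : a.1 = b.1 <;> by_cases h2 : a.2 = b.2 <;>
    simp [h1, h2, Prod.ext_iff]

lemma sum_boole_eq {α : Type*} [Fintype α] [DecidableEq α] (a : α) (f : α → ℝ) :
    ∑ b : α, (if a = b then (1:ℝ) else 0) * f b = f a := by
  simp [boole_mul, Finset.sum_ite_eq]

lemma exp_hip_sq {d m : ℕ} (hm : 0 < m) (x x' : Fin d → ℝ) :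
    ∑ h : Fin d → Fin m, ∑ ξ : Fin d → Bool, (hip h ξ x x') ^ 2
      = (m:ℝ) ^ d * 2 ^ d *
        ((∑ i : Fin d, x i * x' i) ^ 2
          + (1 / m) * ((∑ i : Fin d, x i ^ 2) * (∑ i : Fin d, x' i ^ 2))
          + (1 / m) * (∑ i : Fin d, x i * x' i) ^ 2
          - (2 / m) * ∑ i : Fin d, (x i * x' i) ^ 2) := by
  -- step A : expand the square
  have stepA : ∀ (h : Fin d → Fin m) (ξ : Fin d → Bool), (hip h ξ x x') ^ 2
      = ∑ p : Fin d × Fin d, ∑ q : Fin d × Fin d,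
          ((if h p.1 = h p.2 then (1:ℝ) else 0) * (if h q.1 = h q.2 then 1 else 0)) *
            (((sgn (ξ p.1) * sgn (ξ p.2)) * (sgn (ξ q.1) * sgn (ξ q.2))) *
              ((x p.1 * x' p.2) * (x q.1 * x' q.2))) := by
    intro h ξ
    rw [hip_eq, sq, Finset.sum_mul_sum]
    refine Finset.sum_congr rfl fun p _ => Finset.sum_congr rfl fun q _ => ?_
    ring
  -- step B : pull the ξ-sum inside
  have stepB : ∀ h : Fin d → Fin m, ∑ ξ : Fin d → Bool, (hip h ξ x x') ^ 2
      = ∑ p : Fin d × Fin d, ∑ q : Fin d × Fin d,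
          ((if h p.1 = h p.2 then (1:ℝ) else 0) * (if h q.1 = h q.2 then 1 else 0)) *
            ((∑ ξ : Fin d → Bool,
                (sgn (ξ p.1) * sgn (ξ p.2)) * (sgn (ξ q.1) * sgn (ξ q.2))) *
              ((x p.1 * x' p.2) * (x q.1 * x' q.2))) := by
    intro h
    rw [Finset.sum_congr rfl fun ξ _ => stepA h ξ, Finset.sum_comm]
    refine Finset.sum_congr rfl fun p _ => ?_
    rw [Finset.sum_comm]
    refine Finset.sum_congr rfl fun q _ => ?_
    rw [← Finset.mul_sum]
    congr 1
    rw [← Finset.sum_mul]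
  -- step C : pull the h-sum inside and apply key4
  have stepC : ∑ h : Fin d → Fin m, ∑ ξ : Fin d → Bool, (hip h ξ x x') ^ 2
      = ∑ p : Fin d × Fin d, ∑ q : Fin d × Fin d,
          ((m:ℝ) ^ d * 2 ^ d *
            ((if p.1 = p.2 then (1:ℝ) else 0) * (if q.1 = q.2 then 1 else 0)
              + (1 / m) * ((if p.1 = q.1 then 1 else 0) * (if p.2 = q.2 then 1 else 0))
              + (1 / m) * ((if p.1 = q.2 then 1 else 0) * (if p.2 = q.1 then 1 else 0))
              - (2 / m) * (if p.1 = p.2 ∧ p.1 = q.1 ∧ p.1 = q.2 then 1 else 0))) *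
            ((x p.1 * x' p.2) * (x q.1 * x' q.2)) := by
    rw [Finset.sum_congr rfl fun h _ => stepB h, Finset.sum_comm]
    refine Finset.sum_congr rfl fun p _ => ?_
    rw [Finset.sum_comm]
    refine Finset.sum_congr rfl fun q _ => ?_
    rw [← Finset.sum_mul, ← mul_assoc, key4 hm p.1 p.2 q.1 q.2]
  rw [stepC]
  -- distribute and collapse
  have expand : ∀ p q : Fin d × Fin d,
      ((m:ℝ) ^ d * 2 ^ d *
        ((if p.1 = p.2 then (1:ℝ) else 0) * (if q.1 = q.2 then 1 else 0)
          + (1 / m) * ((if p.1 = q.1 then 1 else 0) * (if p.2 = q.2 then 1 else 0))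
          + (1 / m) * ((if p.1 = q.2 then 1 else 0) * (if p.2 = q.1 then 1 else 0))
          - (2 / m) * (if p.1 = p.2 ∧ p.1 = q.1 ∧ p.1 = q.2 then 1 else 0))) *
        ((x p.1 * x' p.2) * (x q.1 * x' q.2))
      = (m:ℝ) ^ d * 2 ^ d *
          ((((if p.1 = p.2 then (1:ℝ) else 0) * (x p.1 * x' p.2)) *
              ((if q.1 = q.2 then 1 else 0) * (x q.1 * x' q.2)))
            + (1 / m) * (((if p.1 = q.1 then 1 else 0) * (if p.2 = q.2 then 1 else 0)) *
                ((x p.1 * x' p.2) * (x q.1 * x' q.2)))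
            + (1 / m) * (((if p.1 = q.2 then 1 else 0) * (if p.2 = q.1 then 1 else 0)) *
                ((x p.1 * x' p.2) * (x q.1 * x' q.2)))
            - (2 / m) * ((if p.1 = p.2 ∧ p.1 = q.1 ∧ p.1 = q.2 then 1 else 0) *
                ((x p.1 * x' p.2) * (x q.1 * x' q.2)))) := fun p q => by ring
  rw [Finset.sum_congr rfl fun p _ => Finset.sum_congr rfl fun q _ => expand p q]
  simp only [← Finset.mul_sum]
  congr 1
  -- now four collapses
  have single : ∑ p : Fin d × Fin d, (if p.1 = p.2 then (1:ℝ) else 0) * (x p.1 * x' p.2)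
      = ∑ i : Fin d, x i * x' i := by
    rw [Fintype.sum_prod_type]
    simp [boole_mul, Finset.sum_ite_eq]
  have col2 : ∑ p : Fin d × Fin d, ∑ q : Fin d × Fin d,
      (((if p.1 = q.1 then (1:ℝ) else 0) * (if p.2 = q.2 then 1 else 0)) *
        ((x p.1 * x' p.2) * (x q.1 * x' q.2)))
      = (∑ i : Fin d, x i ^ 2) * (∑ i : Fin d, x' i ^ 2) := by
    have inner : ∀ p : Fin d × Fin d, ∑ q : Fin d × Fin d,
        (((if p.1 = q.1 then (1:ℝ) else 0) * (if p.2 = q.2 then 1 else 0)) *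
          ((x p.1 * x' p.2) * (x q.1 * x' q.2)))
        = (x p.1 * x' p.2) * (x p.1 * x' p.2) := by
      intro p
      have : ∀ q : Fin d × Fin d,
          (((if p.1 = q.1 then (1:ℝ) else 0) * (if p.2 = q.2 then 1 else 0)) *
            ((x p.1 * x' p.2) * (x q.1 * x' q.2)))
          = (if p = q then (1:ℝ) else 0) * ((x p.1 * x' p.2) * (x q.1 * x' q.2)) := by
        intro q
        rw [boole_pair_eq]
      rw [Finset.sum_congr rfl fun q _ => this q]
      exact sum_boole_eq p (fun q => (x p.1 * x' p.2) * (x q.1 * x' q.2))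
    rw [Finset.sum_congr rfl fun p _ => inner p, Fintype.sum_prod_type, Finset.sum_mul_sum]
    exact Finset.sum_congr rfl fun i _ => Finset.sum_congr rfl fun j _ => by ring
  have col3 : ∑ p : Fin d × Fin d, ∑ q : Fin d × Fin d,
      (((if p.1 = q.2 then (1:ℝ) else 0) * (if p.2 = q.1 then 1 else 0)) *
        ((x p.1 * x' p.2) * (x q.1 * x' q.2)))
      = (∑ i : Fin d, x i * x' i) ^ 2 := by
    have inner : ∀ p : Fin d × Fin d, ∑ q : Fin d × Fin d,
        (((if p.1 = q.2 then (1:ℝ) else 0) * (if p.2 = q.1 then 1 else 0)) *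
          ((x p.1 * x' p.2) * (x q.1 * x' q.2)))
        = (x p.1 * x' p.2) * (x p.2 * x' p.1) := by
      intro p
      have : ∀ q : Fin d × Fin d,
          (((if p.1 = q.2 then (1:ℝ) else 0) * (if p.2 = q.1 then 1 else 0)) *
            ((x p.1 * x' p.2) * (x q.1 * x' q.2)))
          = (if (p.2, p.1) = q then (1:ℝ) else 0) *
              ((x p.1 * x' p.2) * (x q.1 * x' q.2)) := by
        intro q
        rw [← boole_pair_eq (p.2, p.1) q]
        ring
      rw [Finset.sum_congr rfl fun q _ => this q]
      exact sum_boole_eq (p.2, p.1) (fun q => (x p.1 * x' p.2) * (x q.1 * x' q.2))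
    rw [Finset.sum_congr rfl fun p _ => inner p, Fintype.sum_prod_type, sq,
      Finset.sum_mul_sum]
    exact Finset.sum_congr rfl fun i _ => Finset.sum_congr rfl fun j _ => by ring
  have col4 : ∑ p : Fin d × Fin d, ∑ q : Fin d × Fin d,
      ((if p.1 = p.2 ∧ p.1 = q.1 ∧ p.1 = q.2 then (1:ℝ) else 0) *
        ((x p.1 * x' p.2) * (x q.1 * x' q.2)))
      = ∑ i : Fin d, (x i * x' i) ^ 2 := by
    have inner : ∀ p : Fin d × Fin d, ∑ q : Fin d × Fin d,
        ((if p.1 = p.2 ∧ p.1 = q.1 ∧ p.1 = q.2 then (1:ℝ) else 0) *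
          ((x p.1 * x' p.2) * (x q.1 * x' q.2)))
        = (if p.1 = p.2 then (1:ℝ) else 0) *
            ((x p.1 * x' p.2) * (x p.1 * x' p.1)) := by
      intro p
      have : ∀ q : Fin d × Fin d,
          ((if p.1 = p.2 ∧ p.1 = q.1 ∧ p.1 = q.2 then (1:ℝ) else 0) *
            ((x p.1 * x' p.2) * (x q.1 * x' q.2)))
          = (if p.1 = p.2 then (1:ℝ) else 0) *
              ((if (p.1, p.1) = q then (1:ℝ) else 0) *
                ((x p.1 * x' p.2) * (x q.1 * x' q.2))) := by
        intro q
        rw [ite_and3, ← boole_pair_eq (p.1, p.1) q]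
        ring
      rw [Finset.sum_congr rfl fun q _ => this q, ← Finset.mul_sum,
        sum_boole_eq (p.1, p.1) (fun q => (x p.1 * x' p.2) * (x q.1 * x' q.2))]
    rw [Finset.sum_congr rfl fun p _ => inner p, Fintype.sum_prod_type]
    simp only [boole_mul, Finset.sum_ite_eq, Finset.mem_univ, if_true]
    exact Finset.sum_congr rfl fun i _ => by ring
  simp only [Finset.sum_add_distrib, Finset.sum_sub_distrib, ← Finset.mul_sum]
  rw [col2, col3, col4, ← Finset.sum_mul, single]
  ring

/-- Expectation over the uniformly random pair `(h, ξ)`. -/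
noncomputable def hashExp (d m : ℕ) (f : (Fin d → Fin m) → (Fin d → Bool) → ℝ) : ℝ :=
  (∑ h : Fin d → Fin m, ∑ ξ : Fin d → Bool, f h ξ) / ((m : ℝ) ^ d * 2 ^ d)

/-- For unit vectors, the variance of the hashed inner product is at most `2/m`. -/
theorem hash_kernel_variance_le (d m : ℕ) (hm : 0 < m) (x x' : Fin d → ℝ)
    (hx : ∑ i : Fin d, x i ^ 2 = 1) (hx' : ∑ i : Fin d, x' i ^ 2 = 1) :
    hashExp d m (fun h ξ => (hip h ξ x x') ^ 2) -
        (hashExp d m (fun h ξ => hip h ξ x x')) ^ 2 ≤ 2 / (m : ℝ) := by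
  have hm0 : (0:ℝ) < (m:ℝ) := by exact_mod_cast hm
  have hM : ((m:ℝ) ^ d * 2 ^ d) ≠ 0 := by positivity
  unfold hashExp
  rw [exp_hip hm x x', exp_hip_sq hm x x', hx, hx']
  rw [mul_div_cancel_left₀ _ hM, mul_div_cancel_left₀ _ hM]
  set t := ∑ i : Fin d, x i * x' i with ht
  set u := ∑ i : Fin d, (x i * x' i) ^ 2 with hu
  have ht2 : t ^ 2 ≤ 1 := by
    have := Finset.sum_mul_sq_le_sq_mul_sq Finset.univ x x'
    rw [hx, hx'] at this
    simpa [ht] using this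
  have hu0 : 0 ≤ u := Finset.sum_nonneg fun i _ => sq_nonneg _
  have hEq : (t ^ 2 + 1 / (m:ℝ) * (1 * 1) + 1 / m * t ^ 2 - 2 / m * u) - t ^ 2
      = (1 + t ^ 2 - 2 * u) / m := by
    field_simp
    ring
  rw [hEq]
  have h2 : 1 + t ^ 2 - 2 * u ≤ 2 := by linarith
  exact (div_le_div_iff_of_pos_right hm0).mpr h2
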